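/- Let 0 < α < 1. For every real s with 0 < s < 1 one has ∫₀¹ (x s / (1 - (1-x)s)) · x^{α-1}(1-x)^{-α} / (Γ(α)Γ(1-α)) dx = 1 - (1-s)^α. (In probabilistic terms: if B has the Beta(α, 1-α) distribution and, conditionally on B = p, Y is geometric on {1,2,…} with success probability p, then the probability generating function of Y is the Sibuya generating function 1-(1-s)^α, i.e. Y has the Sibuya distribution with parameter α.) -/

import Mathlib

open Real Set MeasureTheory intervalIntegral

/-- Generalized binomial coefficient `binom(a, k) = a(a-1)⋯(a-k+1)/k!`. -/
noncomputable def genBinom (a : ℝ) (k : ℕ) : ℝ :=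
  (∏ j ∈ Finset.range k, (a - (j : ℝ))) / (Nat.factorial k : ℝ)

section aux

variable {α : ℝ}

/-- The beta integrand agrees with (the real part of) the complex one on `[0,1]`. -/
lemma beta_complex_eq {x : ℝ} (hx : x ∈ Icc (0:ℝ) 1) :
    (x : ℂ) ^ ((α : ℂ) - 1) * (1 - (x : ℂ)) ^ ((1 - (α:ℂ)) - 1)
      = ((x ^ (α - 1) * (1 - x) ^ (-α) : ℝ) : ℂ) := by
  have hx0 : (0:ℝ) ≤ x := hx.1
  have hx1 : (0:ℝ) ≤ 1 - x := by linarith [hx.2]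
  rw [Complex.ofReal_mul, Complex.ofReal_cpow hx0, Complex.ofReal_cpow hx1]
  norm_num

lemma betaIntegrable (hα0 : 0 < α) (hα1 : α < 1) :
    IntervalIntegrable (fun x : ℝ => x ^ (α - 1) * (1 - x) ^ (-α)) volume 0 1 := by
  have hc : IntervalIntegrable (fun x : ℝ =>
      (x : ℂ) ^ ((α:ℂ) - 1) * (1 - (x : ℂ)) ^ ((1 - (α:ℂ)) - 1)) volume 0 1 :=
    Complex.betaIntegral_convergent (by simpa using hα0) (by simp [Complex.sub_re]; linarith)
  rw [intervalIntegrable_iff_integrableOn_Ioc_of_le (by norm_num)] at hc ⊢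
  have hre : IntegrableOn (fun x : ℝ =>
      ((x : ℂ) ^ ((α:ℂ) - 1) * (1 - (x : ℂ)) ^ ((1 - (α:ℂ)) - 1)).re) (Ioc 0 1) volume := hc.re
  refine IntegrableOn.congr_fun hre (fun x hx => ?_) measurableSet_Ioc
  have := beta_complex_eq (α := α) (Ioc_subset_Icc_self hx)
  rw [this]
  simp

lemma betaIntegralValue (hα0 : 0 < α) (hα1 : α < 1) :
    ∫ x in (0:ℝ)..1, x ^ (α - 1) * (1 - x) ^ (-α)
      = Real.Gamma α * Real.Gamma (1 - α) := by
  have h := Complex.Gamma_mul_Gamma_eq_betaIntegral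
    (s := (α:ℂ)) (t := 1 - (α:ℂ)) (by simpa using hα0)
    (by simp [Complex.sub_re]; linarith)
  rw [add_sub_cancel, Complex.Gamma_one, one_mul] at h
  have h2 : Complex.betaIntegral (α:ℂ) (1 - (α:ℂ))
      = ((∫ x in (0:ℝ)..1, x ^ (α - 1) * (1 - x) ^ (-α) : ℝ) : ℂ) := by
    rw [Complex.betaIntegral, ← intervalIntegral.integral_ofReal]
    refine intervalIntegral.integral_congr (fun x hx => ?_)
    rw [uIcc_of_le (by norm_num : (0:ℝ) ≤ 1)] at hx
    exact beta_complex_eq hx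
  rw [h2] at h
  have : ((Real.Gamma α * Real.Gamma (1 - α) : ℝ) : ℂ)
      = ((∫ x in (0:ℝ)..1, x ^ (α - 1) * (1 - x) ^ (-α) : ℝ) : ℂ) := by
    rw [← h, Complex.ofReal_mul, ← Complex.Gamma_ofReal, ← Complex.Gamma_ofReal]
    push_cast
    ring
  exact_mod_cast this.symm

end aux

/-- If `B ~ Beta(α, 1-α)` and, conditionally on `B = p`, `Y` is geometric on `{1,2,…}`
with success probability `p`, then the pgf of `Y` is the Sibuya pgf `1-(1-s)^α`. -/
theorem sibuya_beta_geometric_mixture_pgf (α : ℝ) (hα0 : 0 < α) (hα1 : α < 1)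
    (s : ℝ) (hs0 : 0 < s) (hs1 : s < 1) :
    ∫ x in (0:ℝ)..1,
        (x * s / (1 - (1 - x) * s)) *
          (x ^ (α - 1) * (1 - x) ^ (-α) / (Real.Gamma α * Real.Gamma (1 - α)))
      = 1 - (1 - s) ^ α := by
  set C : ℝ := Real.Gamma α * Real.Gamma (1 - α) with hC
  have hCpos : 0 < C := mul_pos (Real.Gamma_pos_of_pos hα0)
    (Real.Gamma_pos_of_pos (by linarith))
  set β : ℝ → ℝ := fun x => x ^ (α - 1) * (1 - x) ^ (-α) with hβ
  have IB : IntervalIntegrable β volume 0 1 := betaIntegrable hα0 hα1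
  have KB : ∫ x in (0:ℝ)..1, β x = C := betaIntegralValue hα0 hα1
  -- denominator facts
  have hd : ∀ x ∈ Icc (0:ℝ) 1, 0 < 1 - (1 - x) * s := by
    intro x hx
    nlinarith [hx.1, hx.2]
  have hdc : ContinuousOn (fun x : ℝ => 1 - (1 - x) * s) (Icc 0 1) := by fun_prop
  have hdne : ∀ x ∈ Icc (0:ℝ) 1, (1 - (1 - x) * s) ≠ 0 := fun x hx => (hd x hx).ne'
  -- the two pieces
  set h : ℝ → ℝ := fun x => x * s / (1 - (1 - x) * s) with hh
  set q : ℝ → ℝ := fun x => (1 - s) / (1 - (1 - x) * s) * β x with hq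
  have hhc : ContinuousOn h (Icc 0 1) :=
    ((continuousOn_id.mul continuousOn_const).div hdc hdne)
  have hqc : ContinuousOn (fun x : ℝ => (1 - s) / (1 - (1 - x) * s)) (Icc 0 1) :=
    continuousOn_const.div hdc hdne
  have hIcc : uIcc (0:ℝ) 1 = Icc 0 1 := uIcc_of_le (by norm_num)
  have Ih : IntervalIntegrable (fun x => h x * β x) volume 0 1 :=
    IB.continuousOn_mul (hIcc ▸ hhc)
  have Iq : IntervalIntegrable q volume 0 1 :=
    IB.continuousOn_mul (hIcc ▸ hqc)
  -- split: β = h·β + q on [0,1]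
  have hsplit : ∀ x ∈ Icc (0:ℝ) 1, β x = h x * β x + q x := by
    intro x hx
    have hdx := hdne x hx
    simp only [hh, hq]
    have hone : x * s / (1 - (1 - x) * s) + (1 - s) / (1 - (1 - x) * s) = 1 := by
      rw [← add_div, div_eq_one_iff_eq hdx]; ring
    linear_combination (-β x) * hone
  -- substitution: ∫ q = (1-s)^α * C
  set f : ℝ → ℝ := fun x => x / (1 - (1 - x) * s) with hf
  set f' : ℝ → ℝ := fun x => (1 - s) / (1 - (1 - x) * s) ^ 2 with hf'
  set g : ℝ → ℝ := fun y => y ^ (α - 1) * (1 - y) ^ (-α) with hg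
  have hf01 : f 0 = 0 ∧ f 1 = 1 := by
    constructor <;> simp [hf]
  have hfmem : ∀ x ∈ Icc (0:ℝ) 1, f x ∈ Icc (0:ℝ) 1 := by
    intro x hx
    have hdx := hd x hx
    constructor
    · exact div_nonneg hx.1 hdx.le
    · rw [div_le_one hdx]; nlinarith [hx.1, hx.2]
  have hfmemo : ∀ x ∈ Ioo (0:ℝ) 1, f x ∈ Ioo (0:ℝ) 1 := by
    intro x hx
    have hdx := hd x (Ioo_subset_Icc_self hx)
    constructor
    · exact div_pos hx.1 hdx
    · rw [div_lt_one hdx]; nlinarith [hx.1, hx.2]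
  have hfc : ContinuousOn f (Icc 0 1) := continuousOn_id.div hdc hdne
  have hderiv : ∀ x ∈ Ioo (0:ℝ) 1, HasDerivAt f (f' x) x := by
    intro x hx
    have hdx := hdne x (Ioo_subset_Icc_self hx)
    have h1 : HasDerivAt (fun x : ℝ => 1 - (1 - x) * s) s x := by
      have : HasDerivAt (fun x : ℝ => 1 - (1 - x) * s) (0 - (0 - 1) * s) x :=
        (hasDerivAt_const x 1).sub (((hasDerivAt_const x 1).sub (hasDerivAt_id x)).mul_const s)
      simpa using this
    have := (hasDerivAt_id x).div h1 hdx
    refine this.congr_deriv ?_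
    simp only [hf', id]
    ring
  -- the key pointwise identity
  have key : ∀ x ∈ Icc (0:ℝ) 1, f' x * g (f x) = (1 - s) ^ (-α) * q x := by
    intro x hx
    have hdx := hd x hx
    rcases eq_or_lt_of_le hx.1 with h0 | h0
    · -- x = 0
      rw [← h0]
      have : f 0 = 0 := hf01.1
      simp [this, hg, hq, hβ, Real.zero_rpow (by linarith : α - 1 ≠ 0)]
    rcases eq_or_lt_of_le hx.2 with h1 | h1
    · -- x = 1
      rw [h1]
      have : f 1 = 1 := hf01.2
      simp [this, hg, hq, hβ, Real.zero_rpow (by linarith : -α ≠ 0)]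
    -- interior
    have hx0 : 0 < x := h0
    have hx1 : 0 < 1 - x := by linarith
    have hs' : 0 < 1 - s := by linarith
    have hfx : f x = x / (1 - (1 - x) * s) := rfl
    have h1f : 1 - f x = (1 - s) * (1 - x) / (1 - (1 - x) * s) := by
      rw [hfx]; field_simp; ring
    simp only [hg, hq, hβ, hf', hfx, h1f]
    rw [show 1 - x / (1 - (1 - x) * s) = (1 - s) * (1 - x) / (1 - (1 - x) * s) from hfx ▸ h1f]
    rw [Real.div_rpow hx0.le hdx.le, Real.div_rpow (mul_nonneg hs'.le hx1.le) hdx.le,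
      Real.mul_rpow hs'.le hx1.le]
    have hda : (1 - (1 - x) * s) ^ (α - 1)
        = (1 - (1 - x) * s) ^ α / (1 - (1 - x) * s) := by
      rw [Real.rpow_sub hdx, Real.rpow_one]
    have hdna : (1 - (1 - x) * s) ^ (-α) = ((1 - (1 - x) * s) ^ α)⁻¹ :=
      Real.rpow_neg hdx.le α
    rw [hda, hdna]
    have hdα : (0:ℝ) < (1 - (1 - x) * s) ^ α := Real.rpow_pos_of_pos hdx α
    field_simp
    have hD : (0:ℝ) < 1 - s * (1 - x) := by nlinarith
    rw [div_mul_eq_div_div_swap, div_self (Real.rpow_pos_of_pos hD α).ne']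
  -- integrability of the substituted integrand
  have hqInt : IntegrableOn q (Icc (0:ℝ) 1) volume := by
    rw [integrableOn_Icc_iff_integrableOn_Ioc]
    exact (intervalIntegrable_iff_integrableOn_Ioc_of_le (by norm_num)).1 Iq
  have hg2 : IntegrableOn (fun x => f' x • (g ∘ f) x) (Icc (0:ℝ) 1) volume := by
    have : IntegrableOn (fun x => (1 - s) ^ (-α) * q x) (Icc (0:ℝ) 1) volume :=
      hqInt.const_mul _
    exact this.congr_fun (fun x hx => (key x hx).symm) measurableSet_Icc
  have hgcont : ContinuousOn g (Ioo (0:ℝ) 1) := by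
    apply ContinuousOn.mul
    · exact (continuousOn_id.rpow_const (fun x hx => Or.inl (ne_of_gt hx.1)))
    · exact ((continuousOn_const.sub continuousOn_id).rpow_const
        (fun x hx => Or.inl (by simp; linarith [hx.2])))
  have hsub : (∫ x in (0:ℝ)..1, f' x • (g ∘ f) x) = ∫ u in (f 0)..(f 1), g u := by
    apply intervalIntegral.integral_comp_smul_deriv''' (hIcc ▸ hfc)
    · intro x hx
      simp only [min_eq_left, max_eq_right, zero_le_one] at hx
      exact (hderiv x hx).hasDerivWithinAt
    · refine hgcont.mono ?_
      simp only [min_eq_left, max_eq_right, zero_le_one]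
      rw [image_subset_iff]
      exact fun x hx => hfmemo x hx
    · refine IntegrableOn.mono_set (t := Icc (0:ℝ) 1) ?_ ?_
      · exact ((integrableOn_Icc_iff_integrableOn_Ioc (by simp)).2
          ((intervalIntegrable_iff_integrableOn_Ioc_of_le (by norm_num)).1 IB) :
          IntegrableOn g (Icc 0 1) volume)
      · rw [hIcc, image_subset_iff]
        exact fun x hx => hfmem x hx
    · rw [hIcc]; exact hg2
  have hqval : ∫ x in (0:ℝ)..1, q x = (1 - s) ^ α * C := by
    have hs' : 0 < 1 - s := by linarith
    have e1 : (∫ x in (0:ℝ)..1, f' x • (g ∘ f) x)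
        = ∫ x in (0:ℝ)..1, (1 - s) ^ (-α) * q x := by
      refine intervalIntegral.integral_congr (fun x hx => ?_)
      rw [hIcc] at hx
      simpa using key x hx
    rw [e1, hf01.1, hf01.2] at hsub
    rw [intervalIntegral.integral_const_mul] at hsub
    have hgK : ∫ u in (0:ℝ)..1, g u = C := KB
    rw [hgK] at hsub
    have hpos : (0:ℝ) < (1 - s) ^ α := Real.rpow_pos_of_pos hs' _
    rw [Real.rpow_neg hs'.le] at hsub
    field_simp [hpos.ne'] at hsub
    linarith [hsub]
  -- combine
  have hIval : ∫ x in (0:ℝ)..1, h x * β x = (1 - (1 - s) ^ α) * C := by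
    have : ∫ x in (0:ℝ)..1, β x = (∫ x in (0:ℝ)..1, h x * β x) + ∫ x in (0:ℝ)..1, q x := by
      rw [← intervalIntegral.integral_add Ih Iq]
      refine intervalIntegral.integral_congr (fun x hx => ?_)
      rw [hIcc] at hx
      exact hsplit x hx
    rw [KB, hqval] at this
    linarith
  calc ∫ x in (0:ℝ)..1, (x * s / (1 - (1 - x) * s)) * (x ^ (α - 1) * (1 - x) ^ (-α) / C)
      = ∫ x in (0:ℝ)..1, (h x * β x) * C⁻¹ := by
        refine intervalIntegral.integral_congr (fun x hx => ?_)
        simp only [hh, hβ]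
        ring
    _ = (∫ x in (0:ℝ)..1, h x * β x) * C⁻¹ := intervalIntegral.integral_mul_const _ _
    _ = 1 - (1 - s) ^ α := by
        rw [hIval]
        field_simp
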